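/- Let M > 0, m_e ≥ 0, κ = k + 1/2 with k ∈ ℤ, λ ∈ ℝ, z ∈ ℂ with Im z ≠ 0. Let r : ℝ → (M, ∞) be the inverse of the tortoise map u(r) = r + 2M log(r − M) − 2M²/(r − M), J = [[0, −1],[1, 0]], and P(r) = [[−κΩ(r) − m_e r γ(r), −λγ(r)],[−λγ(r), −κΩ(r) + m_e r γ(r)]] with Ω(r) = M/(r² + M²), γ(r) = (r − M)/(r² + M²). If Ξ₁, Ξ₂ : [0, ∞) → ℂ² are continuously differentiable solutions of J Ξ′(u) − P(r(u)) Ξ(u) = z Ξ(u) with ∫₀^∞ ‖Ξᵢ(u)‖² du < ∞ for i = 1, 2, then Ξ₁ and Ξ₂ are linearly dependent; the same conclusion holds for continuously differentiable square-integrable solutions on (−∞, 0]. -/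

import Mathlib

open Set MeasureTheory

/-- The tortoise coordinate `u(r) = r + 2M log(r − M) − 2M²/(r − M)`. -/
noncomputable def tortoise (M r : ℝ) : ℝ :=
  r + 2 * M * Real.log (r - M) - 2 * M ^ 2 / (r - M)

/-- `Ω(r) = M/(r² + M²)`. -/
noncomputable def OmegaF (M r : ℝ) : ℝ := M / (r ^ 2 + M ^ 2)

/-- `γ(r) = (r − M)/(r² + M²)`. -/
noncomputable def gam (M r : ℝ) : ℝ := (r - M) / (r ^ 2 + M ^ 2)

/-- The potential matrix
`P(r) = [[−κΩ(r) − m_e r γ(r), −λγ(r)],[−λγ(r), −κΩ(r) + m_e r γ(r)]]`. -/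
noncomputable def Pmat (M me κ lam r : ℝ) : Matrix (Fin 2) (Fin 2) ℝ :=
  !![-(κ * OmegaF M r) - me * r * gam M r, -(lam * gam M r);
     -(lam * gam M r), -(κ * OmegaF M r) + me * r * gam M r]

/-- `Ξ` is a solution of `J Ξ′ − P(r(u)) Ξ = z Ξ` on the set `s` (with `J = [[0,−1],[1,0]]`),
written componentwise: `Ξ′₀ = zΞ₁ + P₁₀Ξ₀ + P₁₁Ξ₁` and `Ξ′₁ = −(zΞ₀ + P₀₀Ξ₀ + P₀₁Ξ₁)`. -/
def IsDiracSolutionOn (M me κ lam : ℝ) (rr : ℝ → ℝ) (z : ℂ) (Ξ : ℝ → Fin 2 → ℂ)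
    (s : Set ℝ) : Prop :=
  ∀ u ∈ s,
    HasDerivWithinAt (fun v => Ξ v 0)
      (z * Ξ u 1 + ((Pmat M me κ lam (rr u) 1 0 : ℝ) : ℂ) * Ξ u 0 +
        ((Pmat M me κ lam (rr u) 1 1 : ℝ) : ℂ) * Ξ u 1) s u ∧
    HasDerivWithinAt (fun v => Ξ v 1)
      (-(z * Ξ u 0 + ((Pmat M me κ lam (rr u) 0 0 : ℝ) : ℂ) * Ξ u 0 +
        ((Pmat M me κ lam (rr u) 0 1 : ℝ) : ℂ) * Ξ u 1)) s u

lemma Pmat_symm (M me κ lam r : ℝ) :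
    Pmat M me κ lam r 0 1 = Pmat M me κ lam r 1 0 := rfl

lemma conj_mul_self_eq (t : ℂ) : (starRingEnd ℂ) t * t = ((‖t‖ ^ 2 : ℝ) : ℂ) := by
  rw [mul_comm, Complex.mul_conj, Complex.normSq_eq_norm_sq]

/-- Linear combinations of solutions are solutions. -/
lemma combo_solution {M me κ lam : ℝ} {rr : ℝ → ℝ} {z : ℂ} {s : Set ℝ}
    {Ξ₁ Ξ₂ : ℝ → Fin 2 → ℂ} (a b : ℂ)
    (h₁ : IsDiracSolutionOn M me κ lam rr z Ξ₁ s)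
    (h₂ : IsDiracSolutionOn M me κ lam rr z Ξ₂ s) :
    IsDiracSolutionOn M me κ lam rr z (fun u i => a * Ξ₁ u i + b * Ξ₂ u i) s := by
  intro u hu
  obtain ⟨h10, h11⟩ := h₁ u hu
  obtain ⟨h20, h21⟩ := h₂ u hu
  constructor
  · have := (h10.const_mul a).add (h20.const_mul b)
    convert this using 1
    · rfl
    · rfl
    ring
  · have := (h11.const_mul a).add (h21.const_mul b)
    convert this using 1
    · rfl
    · rfl
    ring

/-- The (constant) Wronskian has zero derivative. -/
lemma wronskian_deriv {M me κ lam : ℝ} {rr : ℝ → ℝ} {z : ℂ} {s : Set ℝ}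
    {Ξ₁ Ξ₂ : ℝ → Fin 2 → ℂ}
    (h₁ : IsDiracSolutionOn M me κ lam rr z Ξ₁ s)
    (h₂ : IsDiracSolutionOn M me κ lam rr z Ξ₂ s)
    {u : ℝ} (hu : u ∈ s) :
    HasDerivWithinAt (fun v => Ξ₁ v 0 * Ξ₂ v 1 - Ξ₁ v 1 * Ξ₂ v 0) 0 s u := by
  obtain ⟨h10, h11⟩ := h₁ u hu
  obtain ⟨h20, h21⟩ := h₂ u hu
  have := ((h10.mul h21).sub (h11.mul h20))
  convert this using 1
  · rfl
  · rfl
  rw [Pmat_symm]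
  ring

/-- Green's identity: derivative of the conjugate pairing. -/
lemma green_deriv {M me κ lam : ℝ} {rr : ℝ → ℝ} {z : ℂ} {s : Set ℝ}
    {Φ : ℝ → Fin 2 → ℂ}
    (h : IsDiracSolutionOn M me κ lam rr z Φ s)
    {u : ℝ} (hu : u ∈ s) :
    HasDerivWithinAt
      (fun v => (starRingEnd ℂ) (Φ v 1) * Φ v 0 - (starRingEnd ℂ) (Φ v 0) * Φ v 1)
      ((z - (starRingEnd ℂ) z) * ((‖Φ u 0‖ ^ 2 + ‖Φ u 1‖ ^ 2 : ℝ) : ℂ)) s u := by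
  obtain ⟨h0, h1⟩ := h u hu
  have := ((h1.star.mul h0).sub (h0.star.mul h1))
  convert this using 1
  · rfl
  · rfl
  push_cast
  rw [mul_add]
  rw [show ((z - (starRingEnd ℂ) z) * ((‖Φ u 0‖ : ℂ) ^ 2) = (z - (starRingEnd ℂ) z) *
      ((starRingEnd ℂ) (Φ u 0) * Φ u 0)) by rw [conj_mul_self_eq]; push_cast; ring]
  rw [show ((z - (starRingEnd ℂ) z) * ((‖Φ u 1‖ : ℂ) ^ 2) = (z - (starRingEnd ℂ) z) *
      ((starRingEnd ℂ) (Φ u 1) * Φ u 1)) by rw [conj_mul_self_eq]; push_cast; ring]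
  simp only [Complex.star_def, map_add, map_mul, map_neg, map_sub, Complex.conj_ofReal]
  rw [Pmat_symm]
  ring

/-- **limit point case at both ends.** For `Im z ≠ 0`, any two square-integrable
continuously differentiable solutions of `J Ξ′ − P(r(u)) Ξ = z Ξ` on `[0,∞)` are linearly
dependent, and likewise on `(−∞, 0]`. -/
theorem dirac_limit_point_case
    (M me lam : ℝ) (k : ℤ) (hM : 0 < M) (hme : 0 ≤ me)
    (κ : ℝ) (hκ : κ = (k : ℝ) + 1 / 2)
    (z : ℂ) (hz : z.im ≠ 0)
    (rr : ℝ → ℝ) (hrr_mem : ∀ u, rr u ∈ Ioi M)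
    (hrr_right : ∀ u, tortoise M (rr u) = u)
    (hrr_left : ∀ r ∈ Ioi M, rr (tortoise M r) = r) :
    ∀ s : Set ℝ, (s = Ici (0 : ℝ) ∨ s = Iic (0 : ℝ)) →
      ∀ Ξ₁ Ξ₂ : ℝ → Fin 2 → ℂ,
        IsDiracSolutionOn M me κ lam rr z Ξ₁ s →
        IsDiracSolutionOn M me κ lam rr z Ξ₂ s →
        IntegrableOn (fun u => ‖Ξ₁ u 0‖ ^ 2 + ‖Ξ₁ u 1‖ ^ 2) s →
        IntegrableOn (fun u => ‖Ξ₂ u 0‖ ^ 2 + ‖Ξ₂ u 1‖ ^ 2) s →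
        ∃ a b : ℂ, ¬(a = 0 ∧ b = 0) ∧ ∀ u ∈ s, a • Ξ₁ u + b • Ξ₂ u = 0 := by
  intro s hs Ξ₁ Ξ₂ h₁ h₂ hi₁ hi₂
  have h0s : (0 : ℝ) ∈ s := by
    rcases hs with h | h <;> subst h
    exacts [self_mem_Ici, self_mem_Iic]
  have hconv : Convex ℝ s := by
    rcases hs with h | h <;> subst h
    exacts [convex_Ici 0, convex_Iic 0]
  have hmeas : MeasurableSet s := by
    rcases hs with h | h <;> subst h
    exacts [measurableSet_Ici, measurableSet_Iic]
  have hud : UniqueDiffOn ℝ s := by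
    rcases hs with h | h <;> subst h
    exacts [uniqueDiffOn_Ici 0, uniqueDiffOn_Iic 0]
  have hvol : volume s = ⊤ := by
    rcases hs with h | h <;> subst h
    exacts [Real.volume_Ici, Real.volume_Iic]
  -- Step 1 : the Wronskian vanishes at 0.
  set Wr : ℝ → ℂ := fun v => Ξ₁ v 0 * Ξ₂ v 1 - Ξ₁ v 1 * Ξ₂ v 0 with hWr
  have hWconst : ∀ u ∈ s, Wr u = Wr 0 := by
    intro u hu
    have := hconv.norm_image_sub_le_of_norm_hasDerivWithin_le (f' := fun _ => (0 : ℂ))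
      (C := 0) (fun x hx => wronskian_deriv h₁ h₂ hx) (fun x _ => by simp) h0s hu
    have h2 : ‖Wr u - Wr 0‖ ≤ 0 := by simpa using this
    exact sub_eq_zero.mp (norm_eq_zero.mp (le_antisymm h2 (norm_nonneg _)))
  have hW0 : Wr 0 = 0 := by
    by_contra hne
    set g : ℝ → ℝ := fun u => (‖Ξ₁ u 0‖ ^ 2 + ‖Ξ₁ u 1‖ ^ 2) +
      (‖Ξ₂ u 0‖ ^ 2 + ‖Ξ₂ u 1‖ ^ 2) with hg
    have hgint : IntegrableOn g s := hi₁.add hi₂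
    have hWint : IntegrableOn (fun _ => Wr 0) s := by
      refine Integrable.mono hgint aestronglyMeasurable_const ?_
      refine (ae_restrict_iff' hmeas).2 (Filter.Eventually.of_forall fun u hu => ?_)
      rw [← hWconst u hu]
      have hb : ‖Wr u‖ ≤ g u := by
        have := norm_sub_le (Ξ₁ u 0 * Ξ₂ u 1) (Ξ₁ u 1 * Ξ₂ u 0)
        rw [norm_mul, norm_mul] at this
        have h1 := norm_nonneg (Ξ₁ u 0); have h2 := norm_nonneg (Ξ₁ u 1)
        have h3 := norm_nonneg (Ξ₂ u 0); have h4 := norm_nonneg (Ξ₂ u 1)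
        simp only [hg]
        nlinarith [sq_nonneg (‖Ξ₁ u 0‖ - ‖Ξ₂ u 1‖), sq_nonneg (‖Ξ₁ u 1‖ - ‖Ξ₂ u 0‖)]
      calc ‖Wr u‖ ≤ g u := hb
        _ ≤ ‖g u‖ := le_abs_self _
    rw [integrableOn_const_iff] at hWint
    rcases hWint with h | h
    · exact hne (enorm_eq_zero.mp h)
    · rw [hvol] at h; exact absurd h (by simp)
  -- Step 2 : a nontrivial combination vanishing at 0.
  obtain ⟨a, b, hab, hv0, hv1⟩ : ∃ a b : ℂ, ¬(a = 0 ∧ b = 0) ∧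
      a * Ξ₁ 0 0 + b * Ξ₂ 0 0 = 0 ∧ a * Ξ₁ 0 1 + b * Ξ₂ 0 1 = 0 := by
    simp only [hWr] at hW0
    by_cases hx : Ξ₁ 0 0 = 0
    · by_cases hy : Ξ₁ 0 1 = 0
      · exact ⟨1, 0, by simp, by simp [hx], by simp [hy]⟩
      · refine ⟨Ξ₂ 0 1, -Ξ₁ 0 1, fun hc => hy (by simpa using neg_eq_zero.mp hc.2), ?_, by ring⟩
        linear_combination hW0
    · refine ⟨Ξ₂ 0 0, -Ξ₁ 0 0, fun hc => hx (by simpa using neg_eq_zero.mp hc.2), by ring, ?_⟩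
      linear_combination -hW0
  refine ⟨a, b, hab, ?_⟩
  -- Step 3 : the combination Φ and its norm N.
  set Φ : ℝ → Fin 2 → ℂ := fun u i => a * Ξ₁ u i + b * Ξ₂ u i with hΦdef
  have hΦ : IsDiracSolutionOn M me κ lam rr z Φ s := combo_solution a b h₁ h₂
  set N : ℝ → ℝ := fun u => ‖Φ u 0‖ ^ 2 + ‖Φ u 1‖ ^ 2 with hN
  have hNnonneg : ∀ u, 0 ≤ N u := fun u => by positivity
  have hΦcont : ∀ i : Fin 2, ContinuousOn (fun u => Φ u i) s := by
    intro i u hu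
    fin_cases i
    · exact (hΦ u hu).1.continuousWithinAt
    · exact (hΦ u hu).2.continuousWithinAt
  have hNcont : ContinuousOn N s := by
    have := ((hΦcont 0).norm.pow 2).add ((hΦcont 1).norm.pow 2)
    exact this
  have hNint : IntegrableOn N s := by
    have hgi : IntegrableOn
        (fun u => 2 * ‖a‖ ^ 2 * (‖Ξ₁ u 0‖ ^ 2 + ‖Ξ₁ u 1‖ ^ 2) +
          2 * ‖b‖ ^ 2 * (‖Ξ₂ u 0‖ ^ 2 + ‖Ξ₂ u 1‖ ^ 2)) s :=
      (hi₁.const_mul _).add (hi₂.const_mul _)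
    refine Integrable.mono hgi (hNcont.aestronglyMeasurable hmeas) ?_
    refine (ae_restrict_iff' hmeas).2 (Filter.Eventually.of_forall fun u _ => ?_)
    have key : ∀ x y : ℂ, ‖a * x + b * y‖ ^ 2 ≤ 2 * ‖a‖ ^ 2 * ‖x‖ ^ 2 + 2 * ‖b‖ ^ 2 * ‖y‖ ^ 2 := by
      intro x y
      have h1 := norm_add_le (a * x) (b * y)
      rw [norm_mul, norm_mul] at h1
      nlinarith [norm_nonneg (a * x + b * y), norm_nonneg a, norm_nonneg b,
        norm_nonneg x, norm_nonneg y, sq_nonneg (‖a‖ * ‖x‖ - ‖b‖ * ‖y‖)]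
    have hb0 := key (Ξ₁ u 0) (Ξ₂ u 0)
    have hb1 := key (Ξ₁ u 1) (Ξ₂ u 1)
    have : N u ≤ 2 * ‖a‖ ^ 2 * (‖Ξ₁ u 0‖ ^ 2 + ‖Ξ₁ u 1‖ ^ 2) +
        2 * ‖b‖ ^ 2 * (‖Ξ₂ u 0‖ ^ 2 + ‖Ξ₂ u 1‖ ^ 2) := by
      simp only [hN, hΦdef]; linarith
    calc ‖N u‖ = N u := abs_of_nonneg (hNnonneg u)
      _ ≤ _ := this
      _ ≤ _ := le_abs_self _
  -- Step 4 : Green's function F.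
  set c : ℂ := z - (starRingEnd ℂ) z with hc
  have hcne : c ≠ 0 := by
    intro h
    have := congrArg Complex.im h
    simp [hc, Complex.sub_im, Complex.conj_im] at this
    exact hz (by linarith)
  have hcnorm : 0 < ‖c‖ := norm_pos_iff.mpr hcne
  set w : ℝ → ℂ := fun v => (starRingEnd ℂ) (Φ v 1) * Φ v 0 -
    (starRingEnd ℂ) (Φ v 0) * Φ v 1 with hw
  set F : ℝ → ℝ := fun v => (w v / c).re with hF
  have hFderiv : ∀ u ∈ s, HasDerivWithinAt F (N u) s u := by
    intro u hu
    have h1 : HasDerivWithinAt (fun v => w v / c) (c * ((N u : ℝ) : ℂ) / c) s u :=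
      (green_deriv hΦ hu).div_const c
    rw [mul_div_cancel_left₀ _ hcne] at h1
    have h2 := Complex.reCLM.hasFDerivAt.comp_hasDerivWithinAt u h1
    exact h2
  have hwbound : ∀ u, ‖w u‖ ≤ N u := by
    intro u
    have h1 := norm_sub_le ((starRingEnd ℂ) (Φ u 1) * Φ u 0) ((starRingEnd ℂ) (Φ u 0) * Φ u 1)
    rw [norm_mul, norm_mul, RCLike.norm_conj, RCLike.norm_conj] at h1
    have := sq_nonneg (‖Φ u 0‖ - ‖Φ u 1‖)
    simp only [hw, hN]
    nlinarith [norm_nonneg (Φ u 0), norm_nonneg (Φ u 1)]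
  have hFbound : ∀ u, |F u| ≤ N u / ‖c‖ := by
    intro u
    have h1 : |F u| ≤ ‖w u / c‖ := Complex.abs_re_le_norm _
    rw [norm_div] at h1
    refine h1.trans ?_
    gcongr
    exact hwbound u
  have hF0 : F 0 = 0 := by
    have e0 : Φ 0 0 = 0 := hv0
    have e1 : Φ 0 1 = 0 := hv1
    simp [hF, hw, e0, e1]
  have hFcont : ContinuousOn F s := fun u hu => (hFderiv u hu).continuousWithinAt
  have hFderivAt : ∀ x ∈ interior s, HasDerivAt F (N x) x := by
    intro x hx
    rcases hs with h | h <;> subst h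
    · rw [interior_Ici] at hx
      exact (hFderiv x (Ioi_subset_Ici_self hx)).hasDerivAt (Ici_mem_nhds hx)
    · rw [interior_Iic] at hx
      exact (hFderiv x (Iio_subset_Iic_self hx)).hasDerivAt (Iic_mem_nhds hx)
  have hFmono : MonotoneOn F s := by
    refine monotoneOn_of_deriv_nonneg hconv hFcont
      (fun x hx => ((hFderivAt x hx).differentiableAt).differentiableWithinAt) ?_
    intro x hx
    rw [(hFderivAt x hx).deriv]
    exact hNnonneg x
  -- Step 5 : F vanishes on s.
  have hFzero : ∀ u ∈ s, F u = 0 := by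
    intro u hu
    by_contra hne
    -- a tail on which N is bounded below by a positive constant
    obtain ⟨t, hts, hε, htail⟩ : ∃ t : Set ℝ, t ⊆ s ∧ (0 < ‖c‖ * |F u|) ∧
        (∀ x ∈ t, ‖c‖ * |F u| ≤ N x) ∧ MeasurableSet t ∧ volume t = ⊤ := by
      rcases hs with h | h <;> subst h
      · -- s = Ici 0 : F u ≥ 0, so F u > 0, tail Ici u
        have hu0 : 0 ≤ F u := hF0 ▸ hFmono h0s hu (mem_Ici.mp hu)
        have hupos : 0 < F u := lt_of_le_of_ne hu0 (Ne.symm hne)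
        refine ⟨Ici u, Ici_subset_Ici.mpr (mem_Ici.mp hu), mul_pos hcnorm (abs_pos.mpr hne), fun x hx => ?_, measurableSet_Ici,
          Real.volume_Ici⟩
        have hxs : x ∈ Ici (0 : ℝ) := mem_Ici.mpr (le_trans (mem_Ici.mp hu) (mem_Ici.mp hx))
        have hFx : F u ≤ F x := hFmono hu hxs (mem_Ici.mp hx)
        have := hFbound x
        have hFxpos : 0 < F x := lt_of_lt_of_le hupos hFx
        rw [abs_of_nonneg hFxpos.le] at this
        rw [abs_of_nonneg hu0]
        calc ‖c‖ * F u ≤ ‖c‖ * F x := by nlinarith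
          _ ≤ N x := by rw [mul_comm]; exact (le_div_iff₀ hcnorm).mp this
      · -- s = Iic 0 : F u ≤ 0, so F u < 0, tail Iic u
        have hu0 : F u ≤ 0 := hF0 ▸ hFmono hu h0s (mem_Iic.mp hu)
        have huneg : F u < 0 := lt_of_le_of_ne hu0 hne
        refine ⟨Iic u, Iic_subset_Iic.mpr (mem_Iic.mp hu), mul_pos hcnorm (abs_pos.mpr hne), fun x hx => ?_, measurableSet_Iic,
          Real.volume_Iic⟩
        have hxs : x ∈ Iic (0 : ℝ) := mem_Iic.mpr (le_trans (mem_Iic.mp hx) (mem_Iic.mp hu))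
        have hFx : F x ≤ F u := hFmono hxs hu (mem_Iic.mp hx)
        have := hFbound x
        have hFxneg : F x < 0 := lt_of_le_of_lt hFx huneg
        rw [abs_of_nonpos hFxneg.le] at this
        rw [abs_of_nonpos hu0]
        calc ‖c‖ * -F u ≤ ‖c‖ * -F x := by nlinarith
          _ ≤ N x := by rw [mul_comm]; exact (le_div_iff₀ hcnorm).mp this
    obtain ⟨htail, htmeas, htvol⟩ := htail
    have hNt : IntegrableOn N t := hNint.mono_set hts
    have hconst : IntegrableOn (fun _ => ‖c‖ * |F u|) t := by
      refine Integrable.mono hNt aestronglyMeasurable_const ?_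
      refine (ae_restrict_iff' htmeas).2 (Filter.Eventually.of_forall fun x hx => ?_)
      calc ‖‖c‖ * |F u|‖ = ‖c‖ * |F u| := abs_of_nonneg hε.le
        _ ≤ N x := htail x hx
        _ ≤ ‖N x‖ := le_abs_self _
    rw [integrableOn_const_iff] at hconst
    rcases hconst with h | h
    · exact absurd (enorm_eq_zero.mp h) (ne_of_gt hε)
    · rw [htvol] at h; exact absurd h (by simp)
  -- Step 6 : N vanishes on s, hence Φ vanishes.
  intro u hu
  have hF0' : HasDerivWithinAt F 0 s u :=
    (hasDerivWithinAt_const u s (0 : ℝ)).congr (fun y hy => (hFzero y hy)) (hFzero u hu)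
  have hNu : N u = 0 := by
    have e1 := (hFderiv u hu).derivWithin (hud u hu)
    have e2 := hF0'.derivWithin (hud u hu)
    rw [e2] at e1; exact e1.symm
  have hΦ0 : Φ u 0 = 0 ∧ Φ u 1 = 0 := by
    have h0 := sq_nonneg ‖Φ u 0‖
    have h1 := sq_nonneg ‖Φ u 1‖
    simp only [hN] at hNu
    constructor <;> rw [← norm_eq_zero] <;> nlinarith
  funext i
  fin_cases i
  · simpa [hΦdef] using hΦ0.1
  · simpa [hΦdef] using hΦ0.2
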